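/- In any properly 3-colored 6-point planar set with at most 3 collinear points, each color class has exactly 2 points, and for each color class there is a point of another color on the open segment joining its two points; moreover the three blocking relations among the three color classes form a cyclic pattern (the blocker of each pair belongs to a class whose own pair is blocked by a point of a third class, cyclically). -/

import Mathlib

open scoped Classical

abbrev Pt := ℝ × ℝ

/-- `u` and `v` are mutually visible within `X`: they are distinct and the open
segment between them contains no point of `X`. -/
def Visible (X : Finset Pt) (u v : Pt) : Prop :=
  u ≠ v ∧ ∀ p ∈ X, p ∉ openSegment ℝ u v

/-- A coloring is proper for the visibility graph of `X`: any two distinct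
same-colored points of `X` are blocked by some point of `X` on the open
segment between them. -/
def ProperColoring {α : Type*} (X : Finset Pt) (c : Pt → α) : Prop :=
  ∀ u ∈ X, ∀ v ∈ X, u ≠ v → c u = c v → ∃ p ∈ X, p ∈ openSegment ℝ u v

/-- `X` has at most 3 collinear points. -/
def AtMost3Collinear (X : Finset Pt) : Prop :=
  ∀ S : Finset Pt, S ⊆ X → Collinear ℝ (S : Set Pt) → S.card ≤ 3

/-- A finite set is in (strictly) convex position. -/
def ConvexPos (H : Finset Pt) : Prop :=
  ∀ p ∈ H, p ∉ convexHull ℝ ((H.erase p : Finset Pt) : Set Pt)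

private lemma mem_line_of_openSegment {x y p : Pt} (h : p ∈ openSegment ℝ x y) :
    p ∈ affineSpan ℝ ({x, y} : Set Pt) := by
  rw [openSegment_eq_image_lineMap] at h
  obtain ⟨t, -, rfl⟩ := h
  exact AffineMap.lineMap_mem_affineSpan_pair _ _ _

private lemma col3 {x y p : Pt} (h : p ∈ openSegment ℝ x y) :
    Collinear ℝ ({x, y, p} : Set Pt) := by
  have h2 := collinear_insert_of_mem_affineSpan_pair (mem_line_of_openSegment h)
  exact h2.subset (by intro z hz; simp at hz ⊢; tauto)

private lemma aff3 {x y z : Pt} {a b C : ℝ} (hC : 0 < C) (hsum : a + b = C)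
    (h : C • z = a • x + b • y) : Collinear ℝ ({x, y, z} : Set Pt) := by
  have hz : z = (1 - b / C) • x + (b / C) • y := by
    have h' := congrArg (fun v : Pt => (C⁻¹ : ℝ) • v) h
    simp only [smul_smul, smul_add, inv_mul_cancel₀ hC.ne', one_smul] at h'
    rw [h']
    have ha : C⁻¹ * a = 1 - b / C := by field_simp; linarith
    have hb : C⁻¹ * b = b / C := by field_simp
    rw [ha, hb]
  rw [← AffineMap.lineMap_apply_module] at hz
  have h2 := collinear_insert_of_mem_affineSpan_pair (k := ℝ)
    (hz ▸ AffineMap.lineMap_mem_affineSpan_pair (b / C) x y)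
  exact h2.subset (by intro q hq; simp at hq ⊢; tauto)

private lemma openSegment_trans' {u v p z : Pt} (hp : p ∈ openSegment ℝ u v)
    (hz : z ∈ openSegment ℝ u p) : z ∈ openSegment ℝ u v := by
  obtain ⟨α, β, hα, hβ, hαβ, rfl⟩ := hp
  obtain ⟨s, t, hs, ht, hst, rfl⟩ := hz
  exact ⟨s + t*α, t*β, by positivity, by positivity,
    by linear_combination t * hαβ + hst, by module⟩

private lemma ne_left_of_openSegment {u v p : Pt} (huv : u ≠ v)
    (hp : p ∈ openSegment ℝ u v) : p ≠ u := by
  rintro rfl; exact huv (left_mem_openSegment_iff.mp hp)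

private lemma ne_right_of_openSegment {u v p : Pt} (huv : u ≠ v)
    (hp : p ∈ openSegment ℝ u v) : p ≠ v := by
  rintro rfl; exact huv (right_mem_openSegment_iff.mp hp)

private lemma openSegment_antisymm' {u v p : Pt} (huv : u ≠ v)
    (hp : p ∈ openSegment ℝ u v) (hv : v ∈ openSegment ℝ u p) : False := by
  obtain ⟨α, β, hα, hβ, hαβ, hpe⟩ := hp
  obtain ⟨s, t, hs, ht, hst, hve⟩ := hv
  have hcoef : (1 : ℝ) - t*β = s + t*α := by linear_combination (-t) * hαβ - hst
  have key : (s + t*α) • u = (s + t*α) • v := by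
    have key' : (s + t*α) • u = (1 - t*β) • v := by
      linear_combination (norm := module) hve + t • hpe
    rwa [hcoef] at key'
  have hne : s + t*α ≠ 0 := by positivity
  exact huv (smul_right_injective Pt hne key)

private lemma merge' {a b x y : Pt} (hxb : x ≠ b)
    (h1 : Collinear ℝ ({a, b, x} : Set Pt)) (h2 : Collinear ℝ ({y, b, x} : Set Pt)) :
    Collinear ℝ ({a, b, y} : Set Pt) := by
  have ha := h1.mem_affineSpan_of_mem_of_ne (show b ∈ ({a,b,x} : Set Pt) by simp)
    (show x ∈ ({a,b,x} : Set Pt) by simp) (show a ∈ ({a,b,x} : Set Pt) by simp)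
    (Ne.symm hxb : b ≠ x)
  have hy := h2.mem_affineSpan_of_mem_of_ne (show b ∈ ({y,b,x} : Set Pt) by simp)
    (show x ∈ ({y,b,x} : Set Pt) by simp) (show y ∈ ({y,b,x} : Set Pt) by simp)
    (Ne.symm hxb : b ≠ x)
  have h4 := collinear_insert_insert_of_mem_affineSpan_pair ha hy
  exact h4.subset (by intro z hz; simp at hz ⊢; tauto)

private lemma keyT {u v w p q : Pt} (hncol : ¬ Collinear ℝ ({u, v, w} : Set Pt))
    (hp : p ∈ openSegment ℝ u v) (hq : q ∈ openSegment ℝ v w)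
    {z : Pt} (hz : z ∈ openSegment ℝ p q) :
    z ≠ u ∧ z ≠ v ∧ z ≠ w ∧ z ∉ openSegment ℝ u w := by
  obtain ⟨α, β, hα, hβ, hαβ, rfl⟩ := hp
  obtain ⟨γ, δ, hγ, hδ, hγδ, rfl⟩ := hq
  obtain ⟨s, t, hs, ht, hst, hze⟩ := hz
  have h1 : s*α + s*β + t*γ + t*δ = 1 := by
    linear_combination s * hαβ + t * hγδ + hst
  refine ⟨?_, ?_, ?_, ?_⟩
  · intro hzu
    rw [hzu] at hze
    refine hncol ((aff3 (x := v) (y := w) (z := u) (a := s*β + t*γ) (b := t*δ)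
      (C := s*β + t*γ + t*δ)
      (by positivity) (by ring) ?_).subset (by intro z hz; simp at hz ⊢; tauto))
    linear_combination (norm := module) h1 • u - hze
  · intro hzv
    rw [hzv] at hze
    refine hncol ((aff3 (x := u) (y := w) (z := v) (a := s*α) (b := t*δ)
      (C := s*α + t*δ)
      (by positivity) rfl ?_).subset (by intro z hz; simp at hz ⊢; tauto))
    linear_combination (norm := module) h1 • v - hze
  · intro hzw
    rw [hzw] at hze
    refine hncol ((aff3 (x := u) (y := v) (z := w) (a := s*α) (b := s*β + t*γ)
      (C := s*α + s*β + t*γ)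
      (by positivity) (by ring) ?_).subset (by intro z hz; simp at hz ⊢; tauto))
    linear_combination (norm := module) h1 • w - hze
  · intro hzm
    obtain ⟨a, b, ha, hb, hab, hze2⟩ := hzm
    refine hncol ((aff3 (x := u) (y := w) (z := v) (a := a - s*α) (b := b - t*δ)
      (C := s*β + t*γ) (by positivity) (by linear_combination hab - h1) ?_).subset
      (by intro z hz; simp at hz ⊢; tauto))
    linear_combination (norm := module) hze - hze2

private lemma card4' {a b c d : Pt} (h1 : a ≠ b) (h2 : a ≠ c) (h3 : a ≠ d)
    (h4 : b ≠ c) (h5 : b ≠ d) (h6 : c ≠ d) : ({a, b, c, d} : Finset Pt).card = 4 := by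
  rw [Finset.card_insert_of_notMem (by simp [h1, h2, h3]),
    Finset.card_insert_of_notMem (by simp [h4, h5]),
    Finset.card_insert_of_notMem (by simp [h6]), Finset.card_singleton]

private lemma four_not_collinear {X : Finset Pt} (h3 : AtMost3Collinear X)
    {a b c d : Pt} (ha : a ∈ X) (hb : b ∈ X) (hcm : c ∈ X) (hd : d ∈ X)
    (h1 : a ≠ b) (h2 : a ≠ c) (h3' : a ≠ d) (h4 : b ≠ c) (h5 : b ≠ d) (h6 : c ≠ d)
    (hcol : Collinear ℝ ({a, b, c, d} : Set Pt)) : False := by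
  have hsub : ({a, b, c, d} : Finset Pt) ⊆ X := by
    intro z hz; simp at hz; rcases hz with rfl | rfl | rfl | rfl <;> assumption
  have := h3 {a, b, c, d} hsub (by
    convert hcol using 1; simp)
  rw [card4' h1 h2 h3' h4 h5 h6] at this
  omega

private lemma fin3_pigeon (k a b d : Fin 3) (ha : a ≠ k) (hb : b ≠ k) (hd : d ≠ k) :
    a = b ∨ a = d ∨ b = d := by
  have h1 := k.isLt; have h2 := a.isLt; have h3 := b.isLt; have h4 := d.isLt
  simp only [Ne, Fin.ext_iff] at *
  omega

private lemma fin3_cover (k1 k2 j : Fin 3) (h1 : k1 ≠ 0) (h2 : k2 ≠ 0) (h3 : k1 ≠ k2) :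
    j = 0 ∨ j = k1 ∨ j = k2 := by
  have g1 := k1.isLt; have g2 := k2.isLt; have g3 := j.isLt
  simp only [Ne, Fin.ext_iff, Fin.val_zero] at *
  omega

private lemma fin3_last (k1 k2 j : Fin 3) (h1 : k1 ≠ 0) (h2 : k2 ≠ 0) (h3 : k1 ≠ k2)
    (hj1 : j ≠ k1) (hj2 : j ≠ k2) : j = 0 := by
  have g1 := k1.isLt; have g2 := k2.isLt; have g3 := j.isLt
  simp only [Ne, Fin.ext_iff, Fin.val_zero] at *
  omega

set_option maxHeartbeats 1000000 in
private lemma noMono {X : Finset Pt} {c : Pt → Fin 3} (hcard : X.card = 6)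
    (h3 : AtMost3Collinear X) (hc : ProperColoring X c)
    {u v w : Pt} (hu : u ∈ X) (hv : v ∈ X) (hw : w ∈ X)
    (huv : u ≠ v) (huw : u ≠ w) (hvw : v ≠ w)
    (cuv : c u = c v) (cuw : c u = c w) : False := by
  by_cases hcol : Collinear ℝ ({u, v, w} : Set Pt)
  · -- collinear case
    obtain ⟨p, hpX, hp⟩ := hc u hu v hv huv cuv
    have hpu := ne_left_of_openSegment huv hp
    have hpv := ne_right_of_openSegment huv hp
    by_cases hpw : p = w
    · subst hpw
      obtain ⟨p2, hp2X, hp2⟩ := hc u hu p hpX (Ne.symm hpu) cuw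
      have hp2u := ne_left_of_openSegment (Ne.symm hpu) hp2
      have hp2p := ne_right_of_openSegment (Ne.symm hpu) hp2
      by_cases hp2v : p2 = v
      · subst hp2v
        exact openSegment_antisymm' huv hp hp2
      · -- 4 collinear points u, v, p(=w), p2 on line[u, p]
        have hvline := hcol.mem_affineSpan_of_mem_of_ne
          (show u ∈ ({u,v,p} : Set Pt) by simp) (show p ∈ ({u,v,p} : Set Pt) by simp)
          (show v ∈ ({u,v,p} : Set Pt) by simp) huw
        have hp2line := mem_line_of_openSegment hp2
        have hcol4 := collinear_insert_insert_of_mem_affineSpan_pair hvline hp2line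
        exact four_not_collinear h3 hv hp2X hu hpX (Ne.symm hp2v) (Ne.symm huv)
          (Ne.symm hpv) hp2u hp2p huw hcol4
    · -- p ∉ {u,v,w} : 4 collinear
      have hwline := hcol.mem_affineSpan_of_mem_of_ne
        (show u ∈ ({u,v,w} : Set Pt) by simp) (show v ∈ ({u,v,w} : Set Pt) by simp)
        (show w ∈ ({u,v,w} : Set Pt) by simp) huv
      have hpline := mem_line_of_openSegment hp
      have hcol4 := collinear_insert_insert_of_mem_affineSpan_pair hwline hpline
      exact four_not_collinear h3 hw hpX hu hv (fun h => hpw h.symm) (Ne.symm huw)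
        (Ne.symm hvw) hpu hpv huv hcol4
  · -- triangle case
    obtain ⟨p, hpX, hp⟩ := hc u hu v hv huv cuv
    obtain ⟨q, hqX, hq⟩ := hc v hv w hw hvw (cuv.symm.trans cuw)
    obtain ⟨r, hrX, hr⟩ := hc u hu w hw huw cuw
    have hpu := ne_left_of_openSegment huv hp
    have hpv := ne_right_of_openSegment huv hp
    have hqv := ne_left_of_openSegment hvw hq
    have hqw := ne_right_of_openSegment hvw hq
    have hru := ne_left_of_openSegment huw hr
    have hrw := ne_right_of_openSegment huw hr
    have hpw : p ≠ w := by rintro rfl; exact hcol (col3 hp)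
    have hqu : q ≠ u := by
      rintro rfl
      exact hcol ((col3 hq).subset (by intro z hz; simp at hz ⊢; tauto))
    have hrv : r ≠ v := by
      rintro rfl
      exact hcol ((col3 hr).subset (by intro z hz; simp at hz ⊢; tauto))
    have crossV : ∀ z : Pt, z ≠ v → z ∈ openSegment ℝ u v → z ∈ openSegment ℝ v w → False := by
      intro z hzv h1 h2
      have c2 : Collinear ℝ ({w, v, z} : Set Pt) :=
        (col3 h2).subset (by intro y hy; simp at hy ⊢; tauto)
      exact hcol (merge' hzv (col3 h1) c2)
    have crossU : ∀ z : Pt, z ≠ u → z ∈ openSegment ℝ u v → z ∈ openSegment ℝ u w → False := by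
      intro z hzu h1 h2
      have c1 : Collinear ℝ ({v, u, z} : Set Pt) :=
        (col3 h1).subset (by intro y hy; simp at hy ⊢; tauto)
      have c2 : Collinear ℝ ({w, u, z} : Set Pt) :=
        (col3 h2).subset (by intro y hy; simp at hy ⊢; tauto)
      exact hcol ((merge' hzu c1 c2).subset (by intro y hy; simp at hy ⊢; tauto))
    have crossW : ∀ z : Pt, z ≠ w → z ∈ openSegment ℝ v w → z ∈ openSegment ℝ u w → False := by
      intro z hzw h1 h2
      have c1 : Collinear ℝ ({v, w, z} : Set Pt) := col3 h1
      have c2 : Collinear ℝ ({u, w, z} : Set Pt) := col3 h2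
      exact hcol ((merge' hzw c1 c2).subset (by intro y hy; simp at hy ⊢; tauto))
    have hpq : p ≠ q := by rintro rfl; exact crossV p hpv hp hq
    have hpr : p ≠ r := by rintro rfl; exact crossU p hpu hp hr
    have hqr : q ≠ r := by rintro rfl; exact crossW q hqw hq hr
    have hcard6 : ({u, v, w, p, q, r} : Finset Pt).card = 6 := by
      rw [Finset.card_insert_of_notMem
          (by simp [huv, huw, Ne.symm hpu, Ne.symm hqu, Ne.symm hru]),
        Finset.card_insert_of_notMem
          (by simp [hvw, Ne.symm hpv, Ne.symm hqv, Ne.symm hrv]),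
        Finset.card_insert_of_notMem
          (by simp [Ne.symm hpw, Ne.symm hqw, Ne.symm hrw]),
        Finset.card_insert_of_notMem (by simp [hpq, hpr]),
        Finset.card_insert_of_notMem (by simp [hqr]), Finset.card_singleton]
    have hSX : ({u, v, w, p, q, r} : Finset Pt) = X :=
      Finset.eq_of_subset_of_card_le
        (by intro z hz; simp at hz; rcases hz with rfl|rfl|rfl|rfl|rfl|rfl <;> assumption)
        (by rw [hcard, hcard6])
    have hmem : ∀ z ∈ X, z = u ∨ z = v ∨ z = w ∨ z = p ∨ z = q ∨ z = r := by
      intro z hz; rw [← hSX] at hz; simpa using hz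
    have hcp : c p ≠ c u := by
      intro hcpu
      obtain ⟨s1, hs1X, hs1⟩ := hc u hu p hpX (Ne.symm hpu) hcpu.symm
      have hs1' : s1 ∈ openSegment ℝ u v := openSegment_trans' hp hs1
      rcases hmem s1 hs1X with rfl|rfl|rfl|rfl|rfl|rfl
      · exact (ne_left_of_openSegment huv hs1') rfl
      · exact (ne_right_of_openSegment huv hs1') rfl
      · exact hcol (col3 hs1')
      · exact (ne_right_of_openSegment (Ne.symm hpu) hs1) rfl
      · exact crossV _ hqv hs1' hq
      · exact crossU _ hru hs1' hr
    have hcq : c q ≠ c u := by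
      intro hcqu
      obtain ⟨s1, hs1X, hs1⟩ := hc v hv q hqX (Ne.symm hqv) (cuv.symm.trans hcqu.symm)
      have hs1' : s1 ∈ openSegment ℝ v w := openSegment_trans' hq hs1
      rcases hmem s1 hs1X with rfl|rfl|rfl|rfl|rfl|rfl
      · exact hcol ((col3 hs1').subset (by intro y hy; simp at hy ⊢; tauto))
      · exact (ne_left_of_openSegment hvw hs1') rfl
      · exact (ne_right_of_openSegment hvw hs1') rfl
      · exact crossV _ hpv hp hs1'
      · exact (ne_right_of_openSegment (Ne.symm hqv) hs1) rfl
      · exact crossW _ hrw hs1' hr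
    have hcr : c r ≠ c u := by
      intro hcru
      obtain ⟨s1, hs1X, hs1⟩ := hc u hu r hrX (Ne.symm hru) hcru.symm
      have hs1' : s1 ∈ openSegment ℝ u w := openSegment_trans' hr hs1
      rcases hmem s1 hs1X with rfl|rfl|rfl|rfl|rfl|rfl
      · exact (ne_left_of_openSegment huw hs1') rfl
      · exact hcol ((col3 hs1').subset (by intro y hy; simp at hy ⊢; tauto))
      · exact (ne_right_of_openSegment huw hs1') rfl
      · exact crossU _ hpu hp hs1'
      · exact crossW _ hqw hq hs1'
      · exact (ne_right_of_openSegment (Ne.symm hru) hs1) rfl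
    rcases fin3_pigeon (c u) (c p) (c q) (c r) hcp hcq hcr with h | h | h
    · obtain ⟨s1, hs1X, hs1⟩ := hc p hpX q hqX hpq h
      obtain ⟨T1, T2, T3, T4⟩ := keyT hcol hp hq hs1
      rcases hmem s1 hs1X with rfl|rfl|rfl|rfl|rfl|rfl
      · exact T1 rfl
      · exact T2 rfl
      · exact T3 rfl
      · exact (ne_left_of_openSegment hpq hs1) rfl
      · exact (ne_right_of_openSegment hpq hs1) rfl
      · exact T4 hr
    · have hncol1 : ¬ Collinear ℝ ({v, u, w} : Set Pt) := fun hcc =>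
        hcol (hcc.subset (by intro y hy; simp at hy ⊢; tauto))
      have hp1 : p ∈ openSegment ℝ v u := by rwa [openSegment_symm]
      obtain ⟨s1, hs1X, hs1⟩ := hc p hpX r hrX hpr h
      obtain ⟨T1, T2, T3, T4⟩ := keyT hncol1 hp1 hr hs1
      rcases hmem s1 hs1X with rfl|rfl|rfl|rfl|rfl|rfl
      · exact T2 rfl
      · exact T1 rfl
      · exact T3 rfl
      · exact (ne_left_of_openSegment hpr hs1) rfl
      · exact T4 hq
      · exact (ne_right_of_openSegment hpr hs1) rfl
    · have hncol2 : ¬ Collinear ℝ ({v, w, u} : Set Pt) := fun hcc =>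
        hcol (hcc.subset (by intro y hy; simp at hy ⊢; tauto))
      have hr1 : r ∈ openSegment ℝ w u := by rwa [openSegment_symm]
      obtain ⟨s1, hs1X, hs1⟩ := hc q hqX r hrX hqr h
      obtain ⟨T1, T2, T3, T4⟩ := keyT hncol2 hq hr1 hs1
      rcases hmem s1 hs1X with rfl|rfl|rfl|rfl|rfl|rfl
      · exact T3 rfl
      · exact T1 rfl
      · exact T2 rfl
      · exact T4 (by rwa [openSegment_symm] at hp)
      · exact (ne_left_of_openSegment hqr hs1) rfl
      · exact (ne_right_of_openSegment hqr hs1) rfl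

private lemma no2cyc {X : Finset Pt} (h3 : AtMost3Collinear X) {x y x' y' : Pt}
    (hx : x ∈ X) (hy : y ∈ X) (hx' : x' ∈ X) (hy' : y' ∈ X)
    (hxy : x ≠ y) (hx'y' : x' ≠ y') (d1 : x ≠ x') (d2 : x ≠ y') (d3 : y ≠ x') (d4 : y ≠ y')
    (h1 : x' ∈ openSegment ℝ x y) (h2 : x ∈ openSegment ℝ x' y') : False := by
  have c1 : Collinear ℝ ({x, y, x'} : Set Pt) := col3 h1
  have c2 : Collinear ℝ ({x', y', x} : Set Pt) := col3 h2
  have hym := c1.mem_affineSpan_of_mem_of_ne (show x ∈ ({x,y,x'} : Set Pt) by simp)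
    (show x' ∈ ({x,y,x'} : Set Pt) by simp) (show y ∈ ({x,y,x'} : Set Pt) by simp) d1
  have hy'm := c2.mem_affineSpan_of_mem_of_ne (show x ∈ ({x',y',x} : Set Pt) by simp)
    (show x' ∈ ({x',y',x} : Set Pt) by simp) (show y' ∈ ({x',y',x} : Set Pt) by simp) d1
  have hcol4 := collinear_insert_insert_of_mem_affineSpan_pair hym hy'm
  exact four_not_collinear h3 hy hy' hx hx' d4 (Ne.symm hxy) d3 (Ne.symm d2)
    (Ne.symm hx'y') d1 hcol4

private lemma pair_mem_rearrange {s : Finset Pt} {e0 e1 b : Pt} (h01 : e0 ≠ e1)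
    (hs : s = {e0, e1}) (hb : b ∈ s) : ∃ b1, b ≠ b1 ∧ s = {b, b1} := by
  rw [hs] at hb; simp at hb
  rcases hb with h | h
  · exact ⟨e1, by rw [h]; exact h01, by rw [hs, h]⟩
  · exact ⟨e0, by rw [h]; exact h01.symm, by rw [hs, h, Finset.pair_comm]⟩

private lemma fin3_enum (k : Fin 3) : k = 0 ∨ k = 1 ∨ k = 2 := by revert k; decide

set_option maxHeartbeats 1000000 in
theorem stmt5 (X : Finset Pt) (c : Pt → Fin 3) (hcard : X.card = 6)
    (h3 : AtMost3Collinear X) (hc : ProperColoring X c) :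
    (∀ k : Fin 3, (X.filter (fun p => c p = k)).card = 2) ∧
    ∃ a a' b b' d d' : Pt, X = ({a, a', b, b', d, d'} : Finset Pt) ∧
      c a = c a' ∧ c b = c b' ∧ c d = c d' ∧
      c a ≠ c b ∧ c b ≠ c d ∧ c a ≠ c d ∧
      b ∈ openSegment ℝ a a' ∧ d ∈ openSegment ℝ b b' ∧
      a ∈ openSegment ℝ d d' := by
  classical
  have key2 : ∀ k : Fin 3, (X.filter (fun p => c p = k)).card ≤ 2 := by
    intro k
    by_contra hgt
    push_neg at hgt
    obtain ⟨t, hts, htc⟩ := Finset.exists_subset_card_eq (n := 3) hgt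
    obtain ⟨x, y, z, hxy, hxz, hyz, rfl⟩ := Finset.card_eq_three.mp htc
    have hx := Finset.mem_filter.mp (hts (by simp : x ∈ ({x,y,z} : Finset Pt)))
    have hy := Finset.mem_filter.mp (hts (by simp : y ∈ ({x,y,z} : Finset Pt)))
    have hz := Finset.mem_filter.mp (hts (by simp : z ∈ ({x,y,z} : Finset Pt)))
    exact noMono hcard h3 hc hx.1 hy.1 hz.1 hxy hxz hyz
      (hx.2.trans hy.2.symm) (hx.2.trans hz.2.symm)
  have hsum := Finset.card_eq_sum_card_fiberwise
    (f := c) (s := X) (t := (Finset.univ : Finset (Fin 3))) (fun x _ => Finset.mem_univ _)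
  rw [hcard, Fin.sum_univ_three] at hsum
  have hall : ∀ k : Fin 3, (X.filter (fun p => c p = k)).card = 2 := by
    intro k
    have k0 := key2 0; have k1 := key2 1; have k2 := key2 2
    rcases fin3_enum k with rfl | rfl | rfl <;> omega
  refine ⟨hall, ?_⟩
  have neCls : ∀ (j j' : Fin 3) (x y : Pt), c x = j → c y = j' → j ≠ j' → x ≠ y := by
    intro j j' x y hx hy hne h
    exact hne (by rw [← hx, h, hy])
  -- class of color 0
  obtain ⟨a0, a1, ha01, hA⟩ := Finset.card_eq_two.mp (hall 0)
  have ha0 := Finset.mem_filter.mp (by rw [hA]; simp : a0 ∈ X.filter (fun p => c p = 0))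
  have ha1 := Finset.mem_filter.mp (by rw [hA]; simp : a1 ∈ X.filter (fun p => c p = 0))
  -- blocker of the 0-class pair
  obtain ⟨b0, hb0X, hb0seg⟩ := hc a0 ha0.1 a1 ha1.1 ha01 (ha0.2.trans ha1.2.symm)
  have hb0a0 := ne_left_of_openSegment ha01 hb0seg
  have hb0a1 := ne_right_of_openSegment ha01 hb0seg
  have hk1ne0 : c b0 ≠ 0 := by
    intro h
    exact noMono hcard h3 hc ha0.1 ha1.1 hb0X ha01 (Ne.symm hb0a0) (Ne.symm hb0a1)
      (ha0.2.trans ha1.2.symm) (ha0.2.trans h.symm)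
  -- class of color (c b0)
  obtain ⟨e0, e1, he01, hB0⟩ := Finset.card_eq_two.mp (hall (c b0))
  obtain ⟨b1, hb01, hB⟩ := pair_mem_rearrange he01 hB0
    (Finset.mem_filter.mpr ⟨hb0X, rfl⟩)
  have hb1 := Finset.mem_filter.mp (by rw [hB]; simp : b1 ∈ X.filter (fun p => c p = c b0))
  -- blocker of the b-class pair
  obtain ⟨d0, hd0X, hd0seg⟩ := hc b0 hb0X b1 hb1.1 hb01 hb1.2.symm
  have hd0b0 := ne_left_of_openSegment hb01 hd0seg
  have hd0b1 := ne_right_of_openSegment hb01 hd0seg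
  have hk2nek1 : c d0 ≠ c b0 := by
    intro h
    exact noMono hcard h3 hc hb0X hb1.1 hd0X hb01 (Ne.symm hd0b0) (Ne.symm hd0b1)
      hb1.2.symm h.symm
  have hk2ne0 : c d0 ≠ 0 := by
    intro h
    have hmem : d0 ∈ ({a0, a1} : Finset Pt) := by
      rw [← hA]; exact Finset.mem_filter.mpr ⟨hd0X, h⟩
    have neA0B0 : a0 ≠ b0 := neCls 0 (c b0) a0 b0 ha0.2 rfl (Ne.symm hk1ne0)
    have neA0B1 : a0 ≠ b1 := neCls 0 (c b0) a0 b1 ha0.2 hb1.2 (Ne.symm hk1ne0)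
    have neA1B0 : a1 ≠ b0 := neCls 0 (c b0) a1 b0 ha1.2 rfl (Ne.symm hk1ne0)
    have neA1B1 : a1 ≠ b1 := neCls 0 (c b0) a1 b1 ha1.2 hb1.2 (Ne.symm hk1ne0)
    simp at hmem
    rcases hmem with h0 | h0
    · exact no2cyc h3 ha0.1 ha1.1 hb0X hb1.1 ha01 hb01 neA0B0 neA0B1 neA1B0 neA1B1
        hb0seg (h0 ▸ hd0seg)
    · refine no2cyc h3 ha1.1 ha0.1 hb0X hb1.1 (Ne.symm ha01) hb01 neA1B0 neA1B1
        neA0B0 neA0B1 (by rwa [openSegment_symm] at hb0seg) (h0 ▸ hd0seg)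
  -- class of color (c d0)
  obtain ⟨f0, f1, hf01, hD0⟩ := Finset.card_eq_two.mp (hall (c d0))
  obtain ⟨d1, hd01, hD⟩ := pair_mem_rearrange hf01 hD0
    (Finset.mem_filter.mpr ⟨hd0X, rfl⟩)
  have hd1 := Finset.mem_filter.mp (by rw [hD]; simp : d1 ∈ X.filter (fun p => c p = c d0))
  -- blocker of the d-class pair
  obtain ⟨z, hzX, hzseg⟩ := hc d0 hd0X d1 hd1.1 hd01 hd1.2.symm
  have hzd0 := ne_left_of_openSegment hd01 hzseg
  have hzd1 := ne_right_of_openSegment hd01 hzseg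
  have hczk2 : c z ≠ c d0 := by
    intro h
    exact noMono hcard h3 hc hd0X hd1.1 hzX hd01 (Ne.symm hzd0) (Ne.symm hzd1)
      hd1.2.symm h.symm
  have hczk1 : c z ≠ c b0 := by
    intro h
    have hmem : z ∈ ({b0, b1} : Finset Pt) := by
      rw [← hB]; exact Finset.mem_filter.mpr ⟨hzX, h⟩
    have neB0D0 : b0 ≠ d0 := neCls (c b0) (c d0) b0 d0 rfl rfl (Ne.symm hk2nek1)
    have neB0D1 : b0 ≠ d1 := neCls (c b0) (c d0) b0 d1 rfl hd1.2 (Ne.symm hk2nek1)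
    have neB1D0 : b1 ≠ d0 := neCls (c b0) (c d0) b1 d0 hb1.2 rfl (Ne.symm hk2nek1)
    have neB1D1 : b1 ≠ d1 := neCls (c b0) (c d0) b1 d1 hb1.2 hd1.2 (Ne.symm hk2nek1)
    simp at hmem
    rcases hmem with h0 | h0
    · exact no2cyc h3 hb0X hb1.1 hd0X hd1.1 hb01 hd01 neB0D0 neB0D1 neB1D0 neB1D1
        hd0seg (h0 ▸ hzseg)
    · exact no2cyc h3 hb1.1 hb0X hd0X hd1.1 (Ne.symm hb01) hd01 neB1D0 neB1D1
        neB0D0 neB0D1 (by rwa [openSegment_symm] at hd0seg) (h0 ▸ hzseg)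
  have hcz0 : c z = 0 := fin3_last (c b0) (c d0) (c z) hk1ne0 hk2ne0
    (Ne.symm hk2nek1) hczk1 hczk2
  have hzmem : z ∈ ({a0, a1} : Finset Pt) := by
    rw [← hA]; exact Finset.mem_filter.mpr ⟨hzX, hcz0⟩
  -- X equals the six points
  have hXeq : X = ({a0, a1, b0, b1, d0, d1} : Finset Pt) := by
    apply Finset.Subset.antisymm
    · intro x hx
      rcases fin3_cover (c b0) (c d0) (c x) hk1ne0 hk2ne0 (Ne.symm hk2nek1) with h | h | h
      · have hm : x ∈ ({a0, a1} : Finset Pt) := by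
          rw [← hA]; exact Finset.mem_filter.mpr ⟨hx, h⟩
        simp at hm ⊢; tauto
      · have hm : x ∈ ({b0, b1} : Finset Pt) := by
          rw [← hB]; exact Finset.mem_filter.mpr ⟨hx, h⟩
        simp at hm ⊢; tauto
      · have hm : x ∈ ({d0, d1} : Finset Pt) := by
          rw [← hD]; exact Finset.mem_filter.mpr ⟨hx, h⟩
        simp at hm ⊢; tauto
    · intro x hx
      simp at hx
      rcases hx with rfl|rfl|rfl|rfl|rfl|rfl
      · exact ha0.1
      · exact ha1.1
      · exact hb0X
      · exact hb1.1
      · exact hd0X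
      · exact hd1.1
  simp only [Finset.mem_insert, Finset.mem_singleton] at hzmem
  rcases hzmem with hz0 | hz0
  · refine ⟨a0, a1, b0, b1, d0, d1, hXeq, ha0.2.trans ha1.2.symm, hb1.2.symm, hd1.2.symm,
      ?_, ?_, ?_, hb0seg, hd0seg, hz0 ▸ hzseg⟩
    · rw [ha0.2]; exact Ne.symm hk1ne0
    · exact Ne.symm hk2nek1
    · rw [ha0.2]; exact Ne.symm hk2ne0
  · refine ⟨a1, a0, b0, b1, d0, d1, by rw [hXeq, Finset.insert_comm],
      ha1.2.trans ha0.2.symm, hb1.2.symm, hd1.2.symm, ?_, ?_, ?_,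
      by rwa [openSegment_symm] at hb0seg, hd0seg, hz0 ▸ hzseg⟩
    · rw [ha1.2]; exact Ne.symm hk1ne0
    · exact Ne.symm hk2nek1
    · rw [ha1.2]; exact Ne.symm hk2ne0
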